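/- (Main convergence theorem) Under the connectivity assumption, let {x^k} be any sequence generated by the algorithm. Then every limit point x* of {x^k} is a global minimizer of f (equivalently, ∇f(x*) = 0), and the sequence of function values f(x^k) converges to the minimum value f* = min_{x ∈ (ℝ^d)^n} f(x). -/

import Mathlib

open Finset Filter
open scoped Topology
open scoped RealInnerProductSpace

noncomputable def obj {d n : ℕ} {J : Type*} (a : J → EuclideanSpace ℝ (Fin d))
    (A : Fin n → Finset J) (dhat : Fin n → J → ℝ)
    (B : Fin n → Finset (Fin n)) (lhat : Fin n → Fin n → ℝ)
    (x : Fin n → EuclideanSpace ℝ (Fin d)) : ℝ :=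
  (∑ i, ∑ j ∈ A i, max (‖x i - a j‖ - dhat i j) 0 ^ 2)
    + (1 / 2) * ∑ i, ∑ q ∈ B i, max (‖x i - x q‖ - lhat i q) 0 ^ 2

noncomputable def projBall {d : ℕ} (a : EuclideanSpace ℝ (Fin d)) (r : ℝ)
    (z : EuclideanSpace ℝ (Fin d)) : EuclideanSpace ℝ (Fin d) :=
  if ‖z - a‖ ≤ r then z else a + (r / ‖z - a‖) • (z - a)

/-- The Coop. PPM algorithm: `X (k+1)` is obtained from `X k` by updating the
blocks successively for `i = 1, …, n`. -/
def IsPPM {d n : ℕ} {J : Type*} (a : J → EuclideanSpace ℝ (Fin d))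
    (A : Fin n → Finset J) (dhat : Fin n → J → ℝ)
    (B : Fin n → Finset (Fin n)) (lhat : Fin n → Fin n → ℝ)
    (X : ℕ → Fin n → EuclideanSpace ℝ (Fin d)) : Prop :=
  ∀ (k : ℕ) (i : Fin n),
    X (k + 1) i = (1 / 2 : ℝ) • X k i
      + (1 / (2 * (((A i).card : ℝ) + ((B i).card : ℝ)))) •
        ((∑ j ∈ A i, projBall (a j) (dhat i j) (X k i))
          + ∑ q ∈ B i, projBall (if q < i then X (k + 1) q else X k q) (lhat i q) (X k i))

namespace PPMaux

variable {d : ℕ} {r : ℝ}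

local notation "E" => EuclideanSpace ℝ (Fin d)

lemma pb_eq_of_le {a z : E} (h : ‖z - a‖ ≤ r) : projBall a r z = z := if_pos h

lemma pb_eq_of_lt {a z : E} (h : ¬ ‖z - a‖ ≤ r) :
    projBall a r z = a + (r / ‖z - a‖) • (z - a) := if_neg h

lemma pb_sub_eq {a z : E} (h : ¬ ‖z - a‖ ≤ r) :
    z - projBall a r z = (1 - r / ‖z - a‖) • (z - a) := by
  rw [pb_eq_of_lt h]; module

lemma pb_dist (hr : 0 ≤ r) (a z : E) : ‖projBall a r z - a‖ ≤ r := by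
  by_cases h : ‖z - a‖ ≤ r
  · rw [pb_eq_of_le h]; exact h
  · push_neg at h
    have ht : (0:ℝ) < ‖z - a‖ := lt_of_le_of_lt hr h
    rw [pb_eq_of_lt (not_le.mpr h), add_sub_cancel_left, norm_smul, Real.norm_eq_abs,
      abs_of_nonneg (div_nonneg hr ht.le), div_mul_cancel₀ _ ht.ne']

lemma pb_norm_sub (hr : 0 ≤ r) (a z : E) :
    ‖z - projBall a r z‖ = max (‖z - a‖ - r) 0 := by
  by_cases h : ‖z - a‖ ≤ r
  · rw [pb_eq_of_le h, sub_self, norm_zero, eq_comm, max_eq_right]; linarith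
  · push_neg at h
    have ht : (0:ℝ) < ‖z - a‖ := lt_of_le_of_lt hr h
    have h1 : (0:ℝ) ≤ 1 - r / ‖z - a‖ := by
      rw [sub_nonneg, div_le_one ht]; exact h.le
    rw [pb_sub_eq (not_le.mpr h), norm_smul, Real.norm_eq_abs, abs_of_nonneg h1,
      max_eq_left (by linarith)]
    field_simp

lemma pb_convex (hr : 0 ≤ r) (a z y : E) :
    max (‖z - a‖ - r) 0 ^ 2 + 2 * ⟪z - projBall a r z, y - z⟫
      ≤ max (‖y - a‖ - r) 0 ^ 2 := by
  by_cases h : ‖z - a‖ ≤ r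
  · rw [pb_eq_of_le h, sub_self, max_eq_right (by linarith : ‖z - a‖ - r ≤ 0)]
    simp only [inner_zero_left]
    have : (0:ℝ) ≤ max (‖y - a‖ - r) 0 := le_max_right _ _
    nlinarith
  · push_neg at h
    set t := ‖z - a‖ with htdef
    have ht : (0:ℝ) < t := lt_of_le_of_lt hr h
    set s := t - r with hsdef
    have hs : 0 < s := by simp only [hsdef]; linarith
    set c := 1 - r / t with hcdef
    have hc0 : 0 ≤ c := by rw [hcdef, sub_nonneg, div_le_one ht]; exact h.le
    have hct : c * t = s := by rw [hcdef, hsdef]; field_simp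
    rw [pb_sub_eq (not_le.mpr h), real_inner_smul_left]
    have hyz : y - z = (y - a) - (z - a) := by abel
    rw [hyz, inner_sub_right, real_inner_self_eq_norm_sq]
    set I := ⟪z - a, y - a⟫ with hIdef
    have hCS : I ≤ t * ‖y - a‖ := real_inner_le_norm _ _
    set m := max (‖y - a‖ - r) 0 with hmdef
    have hm0 : 0 ≤ m := le_max_right _ _
    have hm1 : ‖y - a‖ - r ≤ m := le_max_left _ _
    have hmx : max (t - r) 0 = s := max_eq_left hs.le
    rw [hmx]
    have hcI : c * I ≤ s * ‖y - a‖ := by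
      calc c * I ≤ c * (t * ‖y - a‖) := by
            exact mul_le_mul_of_nonneg_left hCS hc0
        _ = s * ‖y - a‖ := by rw [← hct]; ring
    have hct2 : c * t ^ 2 = s * t := by rw [← hct]; ring
    have hgoal : (1 - r / ‖z - a‖) * (I - ‖z - a‖ ^ 2) = c * I - c * t ^ 2 := by
      rw [hcdef, htdef]; ring
    rw [hgoal]
    nlinarith [sq_nonneg (m - s), mul_le_mul_of_nonneg_left hm1 hs.le, hcI, hct2]

lemma pb_descent (hr : 0 ≤ r) (a z y : E) :
    max (‖y - a‖ - r) 0 ^ 2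
      ≤ max (‖z - a‖ - r) 0 ^ 2 + 2 * ⟪z - projBall a r z, y - z⟫ + ‖y - z‖ ^ 2 := by
  set P := projBall a r z with hP
  have hPa : ‖P - a‖ ≤ r := pb_dist hr a z
  have h1 : ‖z - P‖ ^ 2 = max (‖z - a‖ - r) 0 ^ 2 := by rw [pb_norm_sub hr]
  have hexp : ‖(z - P) + (y - z)‖ ^ 2
      = ‖z - P‖ ^ 2 + 2 * ⟪z - P, y - z⟫ + ‖y - z‖ ^ 2 := norm_add_sq_real _ _
  have hyP : (z - P) + (y - z) = y - P := by abel
  have hm : max (‖y - a‖ - r) 0 ≤ ‖y - P‖ := by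
    refine max_le ?_ (norm_nonneg _)
    have := norm_sub_le_norm_sub_add_norm_sub y P a
    linarith
  calc max (‖y - a‖ - r) 0 ^ 2 ≤ ‖y - P‖ ^ 2 :=
        pow_le_pow_left₀ (le_max_right _ _) hm 2
    _ = _ := by rw [← hyP, hexp, h1]

lemma pb_sub_center (a z : E) :
    z - projBall a r z = (z - a) - projBall 0 r (z - a) := by
  unfold projBall
  simp only [sub_zero]
  split_ifs with h
  · abel
  · module

lemma pb_antisymm (w z : E) :
    z - projBall w r z = -(w - projBall z r w) := by
  rw [pb_sub_center w z, pb_sub_center z w]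
  have h1 : w - z = -(z - w) := by abel
  rw [h1]
  unfold projBall
  simp only [sub_zero, norm_neg]
  split_ifs with h
  · abel
  · module

lemma pb_obtuse (hr : 0 ≤ r) (a z c : E) (hc : ‖c - a‖ ≤ r) :
    ⟪z - projBall a r z, c - projBall a r z⟫ ≤ 0 := by
  by_cases h : ‖z - a‖ ≤ r
  · rw [pb_eq_of_le h, sub_self]
    simp
  · push_neg at h
    set t := ‖z - a‖ with htdef
    have ht : (0:ℝ) < t := lt_of_le_of_lt hr h
    have hc0 : 0 ≤ 1 - r / t := by rw [sub_nonneg, div_le_one ht]; exact h.le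
    rw [pb_sub_eq (not_le.mpr h), pb_eq_of_lt (not_le.mpr h), real_inner_smul_left]
    have hsplit : c - (a + (r / t) • (z - a)) = (c - a) - (r / t) • (z - a) := by abel
    rw [hsplit, inner_sub_right, real_inner_smul_right, real_inner_self_eq_norm_sq]
    have hCS : ⟪z - a, c - a⟫ ≤ t * r :=
      le_trans (real_inner_le_norm _ _) (by
        have := mul_le_mul_of_nonneg_left hc ht.le
        simpa using this)
    have h2 : r / t * t ^ 2 = r * t := by field_simp
    have h3 : ⟪z - a, c - a⟫ - r / t * t ^ 2 ≤ 0 := by rw [h2]; linarith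
    exact mul_nonpos_of_nonneg_of_nonpos hc0 h3

lemma pb_firm (hr : 0 ≤ r) (z w : E) :
    ‖(z - projBall 0 r z) - (w - projBall 0 r w)‖ ≤ ‖z - w‖ := by
  set Pz := projBall 0 r z with hPz
  set Pw := projBall 0 r w with hPw
  have hPzr : ‖Pz - 0‖ ≤ r := pb_dist hr 0 z
  have hPwr : ‖Pw - 0‖ ≤ r := pb_dist hr 0 w
  have h1 : ⟪z - Pz, Pw - Pz⟫ ≤ 0 := pb_obtuse hr 0 z Pw hPwr
  have h2 : ⟪w - Pw, Pz - Pw⟫ ≤ 0 := pb_obtuse hr 0 w Pz hPzr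
  set u := z - Pz with hu
  set v := w - Pw with hv
  have key : ‖u - v‖ ^ 2 ≤ ⟪u - v, z - w⟫ := by
    have e1 : z - w = (u - v) + (Pz - Pw) := by rw [hu, hv]; abel
    have e2 : ⟪u - v, z - w⟫ = ‖u - v‖ ^ 2 + ⟪u - v, Pz - Pw⟫ := by
      rw [e1, inner_add_right, real_inner_self_eq_norm_sq]
    have e3 : ⟪u - v, Pz - Pw⟫ = - ⟪u, Pw - Pz⟫ - ⟪v, Pz - Pw⟫ := by
      rw [inner_sub_left]
      have : (Pw - Pz : E) = -(Pz - Pw) := by abel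
      rw [this, inner_neg_right]
      ring
    rw [e2, e3]
    linarith
  by_cases hz : ‖u - v‖ = 0
  · rw [hz]; exact norm_nonneg _
  · have hx : 0 < ‖u - v‖ := lt_of_le_of_ne (norm_nonneg _) (Ne.symm hz)
    have := le_trans key (real_inner_le_norm (u - v) (z - w))
    nlinarith

lemma pb_lip (hr : 0 ≤ r) (a b z w : E) :
    ‖(z - projBall a r z) - (w - projBall b r w)‖ ≤ ‖(z - a) - (w - b)‖ := by
  rw [pb_sub_center a z, pb_sub_center b w]
  exact pb_firm hr _ _

end PPMaux

namespace PPMaux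

section Main

variable {d n : ℕ} {J : Type*}
variable (a : J → EuclideanSpace ℝ (Fin d)) (A : Fin n → Finset J) (dhat : Fin n → J → ℝ)
  (B : Fin n → Finset (Fin n)) (lhat : Fin n → Fin n → ℝ)

local notation "E" => EuclideanSpace ℝ (Fin d)

noncomputable def gradB (i : Fin n) (x : Fin n → EuclideanSpace ℝ (Fin d)) :
    EuclideanSpace ℝ (Fin d) :=
  (2:ℝ) • ((∑ j ∈ A i, (x i - projBall (a j) (dhat i j) (x i)))
    + ∑ q ∈ B i, (x i - projBall (x q) (lhat i q) (x i)))

lemma pb_convex_pair {r : ℝ} (hr : 0 ≤ r) (z1 z2 y1 y2 : E) :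
    max (‖z1 - z2‖ - r) 0 ^ 2 + 2 * ⟪z1 - projBall z2 r z1, (y1 - z1) - (y2 - z2)⟫
      ≤ max (‖y1 - y2‖ - r) 0 ^ 2 := by
  rw [pb_sub_center z2 z1]
  have h2 : (y1 - z1) - (y2 - z2) = (y1 - y2) - (z1 - z2) := by abel
  rw [h2]
  simpa [sub_zero] using pb_convex hr 0 (z1 - z2) (y1 - y2)

lemma sum_swap_B (hBsymm : ∀ i q : Fin n, q ∈ B i ↔ i ∈ B q) (F : Fin n → Fin n → ℝ) :
    ∑ i, ∑ q ∈ B i, F i q = ∑ i, ∑ q ∈ B i, F q i := by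
  rw [Finset.sum_sigma', Finset.sum_sigma']
  exact Finset.sum_nbij' (fun p => ⟨p.2, p.1⟩) (fun p => ⟨p.2, p.1⟩)
    (fun p hp => by
      simp only [Finset.mem_sigma, Finset.mem_univ, true_and] at hp ⊢
      exact (hBsymm p.1 p.2).mp hp)
    (fun p hp => by
      simp only [Finset.mem_sigma, Finset.mem_univ, true_and] at hp ⊢
      exact (hBsymm p.1 p.2).mp hp)
    (fun p _ => rfl) (fun p _ => rfl) (fun p _ => rfl)

lemma gradB_inner (i : Fin n) (x : Fin n → E) (v : E) :
    ⟪gradB a A dhat B lhat i x, v⟫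
      = 2 * ((∑ j ∈ A i, ⟪x i - projBall (a j) (dhat i j) (x i), v⟫)
          + ∑ q ∈ B i, ⟪x i - projBall (x q) (lhat i q) (x i), v⟫) := by
  unfold gradB
  rw [real_inner_smul_left, inner_add_left, sum_inner, sum_inner]

lemma obj_convex (hdhat : ∀ i, ∀ j ∈ A i, 0 ≤ dhat i j)
    (hlhat : ∀ i, ∀ q ∈ B i, 0 ≤ lhat i q)
    (hBsymm : ∀ i q : Fin n, q ∈ B i ↔ i ∈ B q)
    (hlsymm : ∀ i q : Fin n, lhat i q = lhat q i)
    (x y : Fin n → E) :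
    obj a A dhat B lhat x + ∑ i, ⟪gradB a A dhat B lhat i x, y i - x i⟫
      ≤ obj a A dhat B lhat y := by
  set SA : ℝ := ∑ i, ∑ j ∈ A i, ⟪x i - projBall (a j) (dhat i j) (x i), y i - x i⟫ with hSA
  set SB : ℝ := ∑ i, ∑ q ∈ B i, ⟪x i - projBall (x q) (lhat i q) (x i), y i - x i⟫ with hSB
  set SB' : ℝ := ∑ i, ∑ q ∈ B i, ⟪x i - projBall (x q) (lhat i q) (x i), y q - x q⟫ with hSB'
  have hswap : SB' = -SB := by
    rw [hSB', sum_swap_B B hBsymm (fun i q => ⟪x i - projBall (x q) (lhat i q) (x i), y q - x q⟫)]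
    rw [hSB, ← Finset.sum_neg_distrib]
    refine Finset.sum_congr rfl fun i1 _ => ?_
    rw [← Finset.sum_neg_distrib]
    refine Finset.sum_congr rfl fun q hq => ?_
    rw [hlsymm q i1, pb_antisymm (x i1) (x q), inner_neg_left]
  have hgrad : ∑ i, ⟪gradB a A dhat B lhat i x, y i - x i⟫ = 2*SA + 2*SB := by
    simp only [gradB_inner a A dhat B lhat]
    rw [hSA, hSB, Finset.mul_sum, Finset.mul_sum, ← Finset.sum_add_distrib]
    exact Finset.sum_congr rfl fun i _ => by ring
  have h1 : (∑ i, ∑ j ∈ A i, (max (‖x i - a j‖ - dhat i j) 0 ^ 2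
        + 2*⟪x i - projBall (a j) (dhat i j) (x i), y i - x i⟫))
      ≤ ∑ i, ∑ j ∈ A i, max (‖y i - a j‖ - dhat i j) 0 ^ 2 :=
    Finset.sum_le_sum fun i _ => Finset.sum_le_sum fun j hj =>
      pb_convex (hdhat i j hj) (a j) (x i) (y i)
  have h2 : (∑ i, ∑ q ∈ B i, (max (‖x i - x q‖ - lhat i q) 0 ^ 2
        + 2*⟪x i - projBall (x q) (lhat i q) (x i), (y i - x i) - (y q - x q)⟫))
      ≤ ∑ i, ∑ q ∈ B i, max (‖y i - y q‖ - lhat i q) 0 ^ 2 :=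
    Finset.sum_le_sum fun i _ => Finset.sum_le_sum fun q hq =>
      pb_convex_pair (hlhat i q hq) (x i) (x q) (y i) (y q)
  have e1 : (∑ i, ∑ j ∈ A i, (max (‖x i - a j‖ - dhat i j) 0 ^ 2
        + 2*⟪x i - projBall (a j) (dhat i j) (x i), y i - x i⟫))
      = (∑ i, ∑ j ∈ A i, max (‖x i - a j‖ - dhat i j) 0 ^ 2) + 2*SA := by
    rw [hSA, Finset.mul_sum, ← Finset.sum_add_distrib]
    refine Finset.sum_congr rfl fun i _ => ?_
    rw [Finset.mul_sum, ← Finset.sum_add_distrib]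
  have e2 : (∑ i, ∑ q ∈ B i, (max (‖x i - x q‖ - lhat i q) 0 ^ 2
        + 2*⟪x i - projBall (x q) (lhat i q) (x i), (y i - x i) - (y q - x q)⟫))
      = (∑ i, ∑ q ∈ B i, max (‖x i - x q‖ - lhat i q) 0 ^ 2) + (2*SB - 2*SB') := by
    have hterm : ∀ i q : Fin n, (max (‖x i - x q‖ - lhat i q) 0 ^ 2
        + 2*⟪x i - projBall (x q) (lhat i q) (x i), (y i - x i) - (y q - x q)⟫)
        = max (‖x i - x q‖ - lhat i q) 0 ^ 2
          + (2*⟪x i - projBall (x q) (lhat i q) (x i), y i - x i⟫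
            - 2*⟪x i - projBall (x q) (lhat i q) (x i), y q - x q⟫) := by
      intro i q; rw [inner_sub_right]; ring
    simp only [hterm]
    rw [hSB, hSB', Finset.mul_sum, Finset.mul_sum, ← Finset.sum_sub_distrib,
      ← Finset.sum_add_distrib]
    refine Finset.sum_congr rfl fun i _ => ?_
    rw [Finset.mul_sum, Finset.mul_sum, ← Finset.sum_sub_distrib, ← Finset.sum_add_distrib]
  rw [hgrad]
  unfold obj
  rw [e1] at h1
  rw [e2] at h2
  linarith

lemma obj_decomp (hBirr : ∀ i : Fin n, i ∉ B i)
    (hBsymm : ∀ i q : Fin n, q ∈ B i ↔ i ∈ B q)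
    (hlsymm : ∀ i q : Fin n, lhat i q = lhat q i)
    (x : Fin n → E) (i : Fin n) :
    obj a A dhat B lhat x
      = ((∑ j ∈ A i, max (‖x i - a j‖ - dhat i j) 0 ^ 2)
        + ∑ q ∈ B i, max (‖x i - x q‖ - lhat i q) 0 ^ 2)
        + ((∑ i' ∈ Finset.univ.erase i, ∑ j ∈ A i', max (‖x i' - a j‖ - dhat i' j) 0 ^ 2)
          + (1/2) * ∑ i' ∈ Finset.univ.erase i, ∑ q ∈ (B i').erase i,
              max (‖x i' - x q‖ - lhat i' q) 0 ^ 2) := by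
  unfold obj
  rw [← Finset.sum_erase_add Finset.univ _ (Finset.mem_univ i)]
  rw [← Finset.sum_erase_add Finset.univ
      (fun i' => ∑ q ∈ B i', max (‖x i' - x q‖ - lhat i' q) 0 ^ 2) (Finset.mem_univ i)]
  have hsplit : ∀ i' ∈ Finset.univ.erase i,
      (∑ q ∈ B i', max (‖x i' - x q‖ - lhat i' q) 0 ^ 2)
        = (∑ q ∈ (B i').erase i, max (‖x i' - x q‖ - lhat i' q) 0 ^ 2)
          + (if i ∈ B i' then max (‖x i' - x i‖ - lhat i' i) 0 ^ 2 else 0) := by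
    intro i' _
    by_cases h : i ∈ B i'
    · rw [if_pos h, Finset.sum_erase_add _ _ h]
    · rw [if_neg h, add_zero, Finset.erase_eq_of_notMem h]
  rw [Finset.sum_congr rfl hsplit, Finset.sum_add_distrib]
  have hif : (∑ i' ∈ Finset.univ.erase i,
        (if i ∈ B i' then max (‖x i' - x i‖ - lhat i' i) 0 ^ 2 else 0))
      = ∑ q ∈ B i, max (‖x i - x q‖ - lhat i q) 0 ^ 2 := by
    have h1 : ∀ i' ∈ Finset.univ.erase i,
        (if i ∈ B i' then max (‖x i' - x i‖ - lhat i' i) 0 ^ 2 else 0)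
          = (if i' ∈ B i then max (‖x i' - x i‖ - lhat i' i) 0 ^ 2 else 0) := by
      intro i' _
      exact if_congr (hBsymm i' i) rfl rfl
    rw [Finset.sum_congr rfl h1, Finset.sum_ite_mem]
    have h2 : (Finset.univ.erase i) ∩ B i = B i := by
      ext q
      simp only [Finset.mem_inter, Finset.mem_erase, Finset.mem_univ, and_true, true_and]
      refine ⟨fun h => h.2, fun h => ⟨fun he => hBirr i (he ▸ h), h⟩⟩
    rw [h2]
    refine Finset.sum_congr rfl fun q hq => ?_
    rw [norm_sub_rev (x q) (x i), hlsymm q i]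
  rw [hif]
  ring

lemma obj_update_le (hdhat : ∀ i, ∀ j ∈ A i, 0 ≤ dhat i j)
    (hlhat : ∀ i, ∀ q ∈ B i, 0 ≤ lhat i q)
    (hBirr : ∀ i : Fin n, i ∉ B i)
    (hBsymm : ∀ i q : Fin n, q ∈ B i ↔ i ∈ B q)
    (hlsymm : ∀ i q : Fin n, lhat i q = lhat q i)
    (x : Fin n → E) (i : Fin n) (z : E) :
    obj a A dhat B lhat (Function.update x i z)
      ≤ obj a A dhat B lhat x + ⟪gradB a A dhat B lhat i x, z - x i⟫
        + (((A i).card : ℝ) + ((B i).card : ℝ)) * ‖z - x i‖ ^ 2 := by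
  set x' := Function.update x i z with hx'
  have hxi : x' i = z := Function.update_self i z x
  have hxo : ∀ q : Fin n, q ≠ i → x' q = x q := fun q hq => Function.update_of_ne hq z x
  rw [obj_decomp a A dhat B lhat hBirr hBsymm hlsymm x i,
      obj_decomp a A dhat B lhat hBirr hBsymm hlsymm x' i]
  have hrest1 : (∑ i' ∈ Finset.univ.erase i, ∑ j ∈ A i', max (‖x' i' - a j‖ - dhat i' j) 0 ^ 2)
      = ∑ i' ∈ Finset.univ.erase i, ∑ j ∈ A i', max (‖x i' - a j‖ - dhat i' j) 0 ^ 2 := by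
    refine Finset.sum_congr rfl fun i' hi' => ?_
    rw [hxo i' (Finset.mem_erase.mp hi').1]
  have hrest2 : (∑ i' ∈ Finset.univ.erase i, ∑ q ∈ (B i').erase i,
        max (‖x' i' - x' q‖ - lhat i' q) 0 ^ 2)
      = ∑ i' ∈ Finset.univ.erase i, ∑ q ∈ (B i').erase i,
        max (‖x i' - x q‖ - lhat i' q) 0 ^ 2 := by
    refine Finset.sum_congr rfl fun i' hi' => Finset.sum_congr rfl fun q hq => ?_
    rw [hxo i' (Finset.mem_erase.mp hi').1, hxo q (Finset.mem_erase.mp hq).1]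
  have hheadB : (∑ q ∈ B i, max (‖x' i - x' q‖ - lhat i q) 0 ^ 2)
      = ∑ q ∈ B i, max (‖z - x q‖ - lhat i q) 0 ^ 2 := by
    refine Finset.sum_congr rfl fun q hq => ?_
    have hqi : q ≠ i := fun h => hBirr i (h ▸ hq)
    rw [hxi, hxo q hqi]
  have hheadA : (∑ j ∈ A i, max (‖x' i - a j‖ - dhat i j) 0 ^ 2)
      = ∑ j ∈ A i, max (‖z - a j‖ - dhat i j) 0 ^ 2 := by
    refine Finset.sum_congr rfl fun j hj => ?_
    rw [hxi]
  rw [hrest1, hrest2, hheadA, hheadB]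
  have hb1 : (∑ j ∈ A i, max (‖z - a j‖ - dhat i j) 0 ^ 2)
      ≤ (∑ j ∈ A i, max (‖x i - a j‖ - dhat i j) 0 ^ 2)
        + 2 * (∑ j ∈ A i, ⟪x i - projBall (a j) (dhat i j) (x i), z - x i⟫)
        + ((A i).card : ℝ) * ‖z - x i‖ ^ 2 := by
    have := Finset.sum_le_sum (fun j hj => pb_descent (hdhat i j hj) (a j) (x i) z)
    calc (∑ j ∈ A i, max (‖z - a j‖ - dhat i j) 0 ^ 2)
        ≤ ∑ j ∈ A i, (max (‖x i - a j‖ - dhat i j) 0 ^ 2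
            + 2 * ⟪x i - projBall (a j) (dhat i j) (x i), z - x i⟫ + ‖z - x i‖ ^ 2) := this
      _ = _ := by
          rw [Finset.sum_add_distrib, Finset.sum_add_distrib, Finset.sum_const,
            nsmul_eq_mul, Finset.mul_sum]
  have hb2 : (∑ q ∈ B i, max (‖z - x q‖ - lhat i q) 0 ^ 2)
      ≤ (∑ q ∈ B i, max (‖x i - x q‖ - lhat i q) 0 ^ 2)
        + 2 * (∑ q ∈ B i, ⟪x i - projBall (x q) (lhat i q) (x i), z - x i⟫)
        + ((B i).card : ℝ) * ‖z - x i‖ ^ 2 := by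
    have := Finset.sum_le_sum (fun q hq => pb_descent (hlhat i q hq) (x q) (x i) z)
    calc (∑ q ∈ B i, max (‖z - x q‖ - lhat i q) 0 ^ 2)
        ≤ ∑ q ∈ B i, (max (‖x i - x q‖ - lhat i q) 0 ^ 2
            + 2 * ⟪x i - projBall (x q) (lhat i q) (x i), z - x i⟫ + ‖z - x i‖ ^ 2) := this
      _ = _ := by
          rw [Finset.sum_add_distrib, Finset.sum_add_distrib, Finset.sum_const,
            nsmul_eq_mul, Finset.mul_sum]
  have hgi := gradB_inner a A dhat B lhat i x (z - x i)
  linarith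

lemma obj_nonneg (x : Fin n → E) : 0 ≤ obj a A dhat B lhat x := by
  unfold obj
  have h1 : (0:ℝ) ≤ ∑ i, ∑ j ∈ A i, max (‖x i - a j‖ - dhat i j) 0 ^ 2 :=
    Finset.sum_nonneg fun i _ => Finset.sum_nonneg fun j _ => sq_nonneg _
  have h2 : (0:ℝ) ≤ ∑ i, ∑ q ∈ B i, max (‖x i - x q‖ - lhat i q) 0 ^ 2 :=
    Finset.sum_nonneg fun i _ => Finset.sum_nonneg fun q _ => sq_nonneg _
  linarith

lemma obj_continuous : Continuous (obj a A dhat B lhat) := by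
  unfold obj
  apply Continuous.add
  · apply continuous_finset_sum
    intro i _
    apply continuous_finset_sum
    intro j _
    have h1 : Continuous fun x : Fin n → E => ‖x i - a j‖ - dhat i j :=
      (((continuous_apply i).sub continuous_const).norm).sub continuous_const
    exact (h1.max continuous_const).pow 2
  · apply Continuous.mul continuous_const
    apply continuous_finset_sum
    intro i _
    apply continuous_finset_sum
    intro q _
    have h1 : Continuous fun x : Fin n → E => ‖x i - x q‖ - lhat i q :=
      (((continuous_apply i).sub (continuous_apply q)).norm).sub continuous_const
    exact (h1.max continuous_const).pow 2

lemma gradB_lip (hdhat : ∀ i, ∀ j ∈ A i, 0 ≤ dhat i j)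
    (hlhat : ∀ i, ∀ q ∈ B i, 0 ≤ lhat i q) (i : Fin n) (x x' : Fin n → E) :
    ‖gradB a A dhat B lhat i x - gradB a A dhat B lhat i x'‖
      ≤ 4 * (((A i).card : ℝ) + ((B i).card : ℝ)) * ∑ q, ‖x q - x' q‖ := by
  set S : ℝ := ∑ q, ‖x q - x' q‖ with hS
  have hS0 : ∀ q : Fin n, ‖x q - x' q‖ ≤ S :=
    fun q => Finset.single_le_sum (f := fun q => ‖x q - x' q‖)
      (fun q _ => norm_nonneg _) (Finset.mem_univ q)
  have hSnn : 0 ≤ S := Finset.sum_nonneg fun q _ => norm_nonneg _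
  unfold gradB
  rw [← smul_sub, norm_smul, Real.norm_ofNat]
  have hre : ((∑ j ∈ A i, (x i - projBall (a j) (dhat i j) (x i)))
        + ∑ q ∈ B i, (x i - projBall (x q) (lhat i q) (x i)))
      - ((∑ j ∈ A i, (x' i - projBall (a j) (dhat i j) (x' i)))
        + ∑ q ∈ B i, (x' i - projBall (x' q) (lhat i q) (x' i)))
      = (∑ j ∈ A i, ((x i - projBall (a j) (dhat i j) (x i))
            - (x' i - projBall (a j) (dhat i j) (x' i))))
        + ∑ q ∈ B i, ((x i - projBall (x q) (lhat i q) (x i))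
            - (x' i - projBall (x' q) (lhat i q) (x' i))) := by
    simp only [Finset.sum_sub_distrib]
    abel
  rw [hre]
  have hA : ‖∑ j ∈ A i, ((x i - projBall (a j) (dhat i j) (x i))
        - (x' i - projBall (a j) (dhat i j) (x' i)))‖ ≤ ((A i).card : ℝ) * S := by
    calc _ ≤ ∑ j ∈ A i, ‖(x i - projBall (a j) (dhat i j) (x i))
          - (x' i - projBall (a j) (dhat i j) (x' i))‖ := norm_sum_le _ _
      _ ≤ ∑ _j ∈ A i, S := by
          refine Finset.sum_le_sum fun j hj => ?_
          have h1 := pb_lip (hdhat i j hj) (a j) (a j) (x i) (x' i)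
          have h2 : (x i - a j) - (x' i - a j) = x i - x' i := by abel
          rw [h2] at h1
          exact le_trans h1 (hS0 i)
      _ = ((A i).card : ℝ) * S := by rw [Finset.sum_const, nsmul_eq_mul]
  have hB : ‖∑ q ∈ B i, ((x i - projBall (x q) (lhat i q) (x i))
        - (x' i - projBall (x' q) (lhat i q) (x' i)))‖ ≤ ((B i).card : ℝ) * (2*S) := by
    calc _ ≤ ∑ q ∈ B i, ‖(x i - projBall (x q) (lhat i q) (x i))
          - (x' i - projBall (x' q) (lhat i q) (x' i))‖ := norm_sum_le _ _
      _ ≤ ∑ _q ∈ B i, 2*S := by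
          refine Finset.sum_le_sum fun q hq => ?_
          have h1 := pb_lip (hlhat i q hq) (x q) (x' q) (x i) (x' i)
          have h2 : (x i - x q) - (x' i - x' q) = (x i - x' i) - (x q - x' q) := by abel
          rw [h2] at h1
          have h3 := norm_sub_le (x i - x' i) (x q - x' q)
          have h4 := hS0 i
          have h5 := hS0 q
          linarith
      _ = ((B i).card : ℝ) * (2*S) := by rw [Finset.sum_const, nsmul_eq_mul]
  have htri := norm_add_le (∑ j ∈ A i, ((x i - projBall (a j) (dhat i j) (x i))
        - (x' i - projBall (a j) (dhat i j) (x' i))))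
    (∑ q ∈ B i, ((x i - projBall (x q) (lhat i q) (x i))
        - (x' i - projBall (x' q) (lhat i q) (x' i))))
  have hcA : (0:ℝ) ≤ ((A i).card : ℝ) := Nat.cast_nonneg _
  have hcB : (0:ℝ) ≤ ((B i).card : ℝ) := Nat.cast_nonneg _
  nlinarith [mul_nonneg hcA hSnn, mul_nonneg hcB hSnn]

lemma term_A_le (x : Fin n → E) (i : Fin n) {j : J} (hj : j ∈ A i) :
    max (‖x i - a j‖ - dhat i j) 0 ^ 2 ≤ obj a A dhat B lhat x := by
  unfold obj
  have h1 : max (‖x i - a j‖ - dhat i j) 0 ^ 2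
      ≤ ∑ j ∈ A i, max (‖x i - a j‖ - dhat i j) 0 ^ 2 :=
    Finset.single_le_sum (f := fun j => max (‖x i - a j‖ - dhat i j) 0 ^ 2)
      (fun j _ => sq_nonneg _) hj
  have h2 : (∑ j ∈ A i, max (‖x i - a j‖ - dhat i j) 0 ^ 2)
      ≤ ∑ i, ∑ j ∈ A i, max (‖x i - a j‖ - dhat i j) 0 ^ 2 :=
    Finset.single_le_sum (f := fun i => ∑ j ∈ A i, max (‖x i - a j‖ - dhat i j) 0 ^ 2)
      (fun i _ => Finset.sum_nonneg fun j _ => sq_nonneg _) (Finset.mem_univ i)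
  have h3 : (0:ℝ) ≤ ∑ i, ∑ q ∈ B i, max (‖x i - x q‖ - lhat i q) 0 ^ 2 :=
    Finset.sum_nonneg fun i _ => Finset.sum_nonneg fun q _ => sq_nonneg _
  linarith

lemma term_B_le (x : Fin n → E) (i : Fin n) {q : Fin n} (hq : q ∈ B i) :
    max (‖x i - x q‖ - lhat i q) 0 ^ 2 ≤ 2 * obj a A dhat B lhat x := by
  unfold obj
  have h1 : max (‖x i - x q‖ - lhat i q) 0 ^ 2
      ≤ ∑ q ∈ B i, max (‖x i - x q‖ - lhat i q) 0 ^ 2 :=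
    Finset.single_le_sum (f := fun q => max (‖x i - x q‖ - lhat i q) 0 ^ 2)
      (fun q _ => sq_nonneg _) hq
  have h2 : (∑ q ∈ B i, max (‖x i - x q‖ - lhat i q) 0 ^ 2)
      ≤ ∑ i, ∑ q ∈ B i, max (‖x i - x q‖ - lhat i q) 0 ^ 2 :=
    Finset.single_le_sum (f := fun i => ∑ q ∈ B i, max (‖x i - x q‖ - lhat i q) 0 ^ 2)
      (fun i _ => Finset.sum_nonneg fun q _ => sq_nonneg _) (Finset.mem_univ i)
  have h3 : (0:ℝ) ≤ ∑ i, ∑ j ∈ A i, max (‖x i - a j‖ - dhat i j) 0 ^ 2 :=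
    Finset.sum_nonneg fun i _ => Finset.sum_nonneg fun j _ => sq_nonneg _
  linarith

lemma bndA (x : Fin n → E) (i : Fin n) {j : J} (hj : j ∈ A i) :
    ‖x i‖ ≤ ‖a j‖ + dhat i j + Real.sqrt (obj a A dhat B lhat x) := by
  have h1 := term_A_le a A dhat B lhat x i hj
  have h2 : max (‖x i - a j‖ - dhat i j) 0 ≤ Real.sqrt (obj a A dhat B lhat x) := by
    have h3 := Real.sqrt_le_sqrt h1
    rwa [Real.sqrt_sq (le_max_right _ _)] at h3
  have h4 : ‖x i - a j‖ - dhat i j ≤ Real.sqrt (obj a A dhat B lhat x) :=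
    le_trans (le_max_left _ _) h2
  have h5 : ‖x i‖ ≤ ‖x i - a j‖ + ‖a j‖ := by
    have := norm_add_le (x i - a j) (a j)
    simpa using this
  linarith

lemma bndB (x : Fin n → E) (i : Fin n) {q : Fin n} (hq : q ∈ B i) :
    ‖x i‖ ≤ ‖x q‖ + lhat i q + Real.sqrt (2 * obj a A dhat B lhat x) := by
  have h1 := term_B_le a A dhat B lhat x i hq
  have h2 : max (‖x i - x q‖ - lhat i q) 0 ≤ Real.sqrt (2 * obj a A dhat B lhat x) := by
    have h3 := Real.sqrt_le_sqrt h1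
    rwa [Real.sqrt_sq (le_max_right _ _)] at h3
  have h4 : ‖x i - x q‖ - lhat i q ≤ Real.sqrt (2 * obj a A dhat B lhat x) :=
    le_trans (le_max_left _ _) h2
  have h5 : ‖x i‖ ≤ ‖x i - x q‖ + ‖x q‖ := by
    have := norm_add_le (x i - x q) (x q)
    simpa using this
  linarith

end Main
end PPMaux


open PPMaux

set_option maxHeartbeats 1000000

theorem stmt10 (d n : ℕ) (hd : 1 ≤ d) (hn : 1 ≤ n) {J : Type*} [Fintype J]
    (a : J → EuclideanSpace ℝ (Fin d))
    (A : Fin n → Finset J) (dhat : Fin n → J → ℝ)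
    (B : Fin n → Finset (Fin n)) (lhat : Fin n → Fin n → ℝ)
    (hdhat : ∀ i, ∀ j ∈ A i, 0 ≤ dhat i j)
    (hlhat : ∀ i, ∀ q ∈ B i, 0 ≤ lhat i q)
    (hBirr : ∀ i : Fin n, i ∉ B i)
    (hBsymm : ∀ i q : Fin n, q ∈ B i ↔ i ∈ B q)
    (hlsymm : ∀ i q : Fin n, lhat i q = lhat q i)
    (hcard : ∀ i : Fin n, 1 ≤ (A i).card + (B i).card)
    (X : ℕ → Fin n → EuclideanSpace ℝ (Fin d))
    (hX : IsPPM a A dhat B lhat X)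
    (hconn : ∀ i : Fin n, ∃ (r : ℕ) (c : ℕ → Fin n), c 0 = i ∧
      (∀ t, t < r → c (t + 1) ∈ B (c t)) ∧ (A (c r)).Nonempty) :
    (∀ p : Fin n → EuclideanSpace ℝ (Fin d), MapClusterPt p atTop X →
      ∀ y : Fin n → EuclideanSpace ℝ (Fin d), obj a A dhat B lhat p ≤ obj a A dhat B lhat y) ∧
    Tendsto (fun k : ℕ => obj a A dhat B lhat (X k)) atTop
      (nhds (⨅ y : Fin n → EuclideanSpace ℝ (Fin d), obj a A dhat B lhat y)) := by
  classical
  have hM1 : ∀ i : Fin n, (1:ℝ) ≤ ((A i).card : ℝ) + ((B i).card : ℝ) := by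
    intro i
    exact_mod_cast hcard i
  have hMpos : ∀ i : Fin n, (0:ℝ) < ((A i).card : ℝ) + ((B i).card : ℝ) :=
    fun i => lt_of_lt_of_le one_pos (hM1 i)
  set V : ℕ → ℕ → (Fin n → EuclideanSpace ℝ (Fin d)) :=
    fun k m q => if (q : ℕ) < m then X (k+1) q else X k q with hVdef
  have hV0 : ∀ k, V k 0 = X k := by
    intro k; funext q; simp [hVdef]
  have hVn : ∀ k m, n ≤ m → V k m = X (k+1) := by
    intro k m hm; funext q
    simp [hVdef, lt_of_lt_of_le q.2 hm]
  have hVX : ∀ k m (q : Fin n), ‖V k m q - X k q‖ ≤ ‖X (k+1) q - X k q‖ := by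
    intro k m q
    by_cases h : (q:ℕ) < m
    · simp [hVdef, h]
    · simp [hVdef, h]
  have hVii : ∀ k (i : Fin n), V k (i:ℕ) i = X k i := by
    intro k i; simp [hVdef]
  -- step identity
  have hstep : ∀ k (i : Fin n),
      X (k+1) i = X k i - (1/(4 * (((A i).card : ℝ) + ((B i).card : ℝ)))) •
        gradB a A dhat B lhat i (V k (i:ℕ)) := by
    intro k i
    have hXk := hX k i
    have hcenter : ∀ q : Fin n, V k (i:ℕ) q = if q < i then X (k+1) q else X k q := by
      intro q
      show (if (q:ℕ) < (i:ℕ) then X (k+1) q else X k q) = _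
      simp only [Fin.lt_def]
    have hgb : gradB a A dhat B lhat i (V k (i:ℕ))
        = (2:ℝ) • (((((A i).card : ℝ) + ((B i).card : ℝ))) • X k i
          - ((∑ j ∈ A i, projBall (a j) (dhat i j) (X k i))
            + ∑ q ∈ B i, projBall (if q < i then X (k + 1) q else X k q) (lhat i q) (X k i))) := by
      unfold gradB
      simp only [hVii, hcenter]
      rw [Finset.sum_sub_distrib, Finset.sum_sub_distrib, Finset.sum_const, Finset.sum_const,
        ← Nat.cast_smul_eq_nsmul ℝ, ← Nat.cast_smul_eq_nsmul ℝ]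
      module
    rw [hgb]
    rw [hXk]
    have hMne : (((A i).card : ℝ) + ((B i).card : ℝ)) ≠ 0 := (hMpos i).ne'
    match_scalars
    all_goals (field_simp; try ring)
  -- successive update identity
  have hupd : ∀ k (i : Fin n), V k ((i:ℕ)+1) = Function.update (V k (i:ℕ)) i (X (k+1) i) := by
    intro k i
    funext q
    by_cases hq : q = i
    · subst hq
      rw [Function.update_self]
      simp [hVdef]
    · rw [Function.update_of_ne hq]
      have hne : (q:ℕ) ≠ (i:ℕ) := fun h => hq (Fin.ext h)
      by_cases h2 : (q:ℕ) < (i:ℕ)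
      · simp [hVdef, h2, Nat.lt_succ_of_lt h2]
      · have h3 : ¬ (q:ℕ) < (i:ℕ)+1 := by omega
        simp [hVdef, h2, h3]
  -- per-block sufficient decrease
  have hdec1 : ∀ k (i : Fin n),
      obj a A dhat B lhat (V k ((i:ℕ)+1))
        + (3/(16 * (((A i).card : ℝ) + ((B i).card : ℝ))))
          * ‖gradB a A dhat B lhat i (V k (i:ℕ))‖^2
      ≤ obj a A dhat B lhat (V k (i:ℕ)) := by
    intro k i
    have hul := obj_update_le a A dhat B lhat hdhat hlhat hBirr hBsymm hlsymm
      (V k (i:ℕ)) i (X (k+1) i)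
    rw [← hupd k i] at hul
    have hcpos : (0:ℝ) < 1/(4 * (((A i).card : ℝ) + ((B i).card : ℝ))) := by
      have := hMpos i; exact div_pos one_pos (by linarith)
    have hz : X (k+1) i - V k (i:ℕ) i
        = -((1/(4 * (((A i).card : ℝ) + ((B i).card : ℝ)))) •
            gradB a A dhat B lhat i (V k (i:ℕ))) := by
      rw [hVii k i]
      rw [hstep k i]
      abel
    rw [hz, inner_neg_right, real_inner_smul_right, real_inner_self_eq_norm_sq,
      norm_neg, norm_smul, Real.norm_eq_abs, abs_of_pos hcpos] at hul
    have hMne : (((A i).card : ℝ) + ((B i).card : ℝ)) ≠ 0 := (hMpos i).ne'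
    have key : obj a A dhat B lhat (V k (i:ℕ))
          + -((1/(4 * (((A i).card : ℝ) + ((B i).card : ℝ))))
              * ‖gradB a A dhat B lhat i (V k (i:ℕ))‖^2)
          + ((((A i).card : ℝ) + ((B i).card : ℝ)))
            * (((1/(4 * (((A i).card : ℝ) + ((B i).card : ℝ))))
              * ‖gradB a A dhat B lhat i (V k (i:ℕ))‖)^2)
        = obj a A dhat B lhat (V k (i:ℕ))
          - (3/(16 * (((A i).card : ℝ) + ((B i).card : ℝ))))
            * ‖gradB a A dhat B lhat i (V k (i:ℕ))‖^2 := by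
      field_simp
      ring
    rw [key] at hul
    linarith
  have hVdec : ∀ k m, obj a A dhat B lhat (V k (m+1)) ≤ obj a A dhat B lhat (V k m) := by
    intro k m
    by_cases hm : m < n
    · have h := hdec1 k ⟨m, hm⟩
      have h2 : (0:ℝ) ≤ (3/(16 * (((A ⟨m,hm⟩).card : ℝ) + ((B ⟨m,hm⟩).card : ℝ))))
          * ‖gradB a A dhat B lhat ⟨m,hm⟩ (V k m)‖^2 := by
        have := hMpos ⟨m, hm⟩; exact mul_nonneg (div_nonneg (by norm_num) (by linarith)) (sq_nonneg _)
      simp only [] at h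
      linarith [h]
    · rw [hVn k (m+1) (by omega), hVn k m (by omega)]
  have hVanti : ∀ k, Antitone (fun m => obj a A dhat B lhat (V k m)) :=
    fun k => antitone_nat_of_succ_le (hVdec k)
  have hXdec : ∀ k, obj a A dhat B lhat (X (k+1)) ≤ obj a A dhat B lhat (X k) := by
    intro k
    have := hVanti k (Nat.zero_le n)
    dsimp only at this
    rwa [hV0, hVn k n le_rfl] at this
  have hanti : Antitone (fun k => obj a A dhat B lhat (X k)) :=
    antitone_nat_of_succ_le hXdec
  have hbddb : BddBelow (Set.range fun k => obj a A dhat B lhat (X k)) := by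
    refine ⟨0, ?_⟩
    rintro _ ⟨k, rfl⟩
    exact obj_nonneg a A dhat B lhat (X k)
  have hL : Tendsto (fun k => obj a A dhat B lhat (X k)) atTop
      (𝓝 (⨅ k, obj a A dhat B lhat (X k))) := tendsto_atTop_ciInf hanti hbddb
  set L : ℝ := ⨅ k, obj a A dhat B lhat (X k) with hLdef
  have hL1 : Tendsto (fun k => obj a A dhat B lhat (X (k+1))) atTop (𝓝 L) :=
    hL.comp (tendsto_add_atTop_nat 1)
  have hdiff : Tendsto (fun k => obj a A dhat B lhat (X k) - obj a A dhat B lhat (X (k+1)))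
      atTop (𝓝 0) := by
    have := hL.sub hL1
    simpa using this
  -- gradient at intermediate points tends to zero
  have hgV : ∀ i : Fin n, Tendsto (fun k => ‖gradB a A dhat B lhat i (V k (i:ℕ))‖)
      atTop (𝓝 0) := by
    intro i
    have hMp := hMpos i
    have hsq : Tendsto (fun k => ‖gradB a A dhat B lhat i (V k (i:ℕ))‖^2) atTop (𝓝 0) := by
      apply squeeze_zero (fun k => sq_nonneg _)
        (g := fun k => (16 * (((A i).card : ℝ) + ((B i).card : ℝ))/3)
          * (obj a A dhat B lhat (X k) - obj a A dhat B lhat (X (k+1))))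
      · intro k
        have h1 := hdec1 k i
        have h2 : obj a A dhat B lhat (X (k+1)) ≤ obj a A dhat B lhat (V k ((i:ℕ)+1)) := by
          have := hVanti k (show (i:ℕ)+1 ≤ n by omega)
          dsimp only at this
          rwa [hVn k n le_rfl] at this
        have h3 : obj a A dhat B lhat (V k (i:ℕ)) ≤ obj a A dhat B lhat (X k) := by
          have := hVanti k (Nat.zero_le (i:ℕ))
          dsimp only at this
          rwa [hV0] at this
        have hD : (3/(16 * (((A i).card : ℝ) + ((B i).card : ℝ))))
            * ‖gradB a A dhat B lhat i (V k (i:ℕ))‖^2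
            ≤ obj a A dhat B lhat (X k) - obj a A dhat B lhat (X (k+1)) := by linarith
        have habs : ∀ (m G D : ℝ), 1 ≤ m → 0 ≤ G → 3/(16*m) * G ≤ D → G ≤ 16*m/3 * D := by
          intro m G D hm hG hle
          have hm0 : 0 < m := lt_of_lt_of_le one_pos hm
          have h4 := mul_le_mul_of_nonneg_left hle (by positivity : (0:ℝ) ≤ 16*m/3)
          calc G = 16*m/3 * (3/(16*m) * G) := by field_simp
            _ ≤ _ := h4
        exact habs _ _ _ (hM1 i) (sq_nonneg _) hD
      · have := hdiff.const_mul (16 * (((A i).card : ℝ) + ((B i).card : ℝ))/3)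
        rw [mul_zero] at this
        exact this
    have h := (Real.continuous_sqrt.tendsto 0).comp hsq
    rw [Real.sqrt_zero] at h
    exact h.congr (fun k => Real.sqrt_sq (norm_nonneg _))
  have hDelta : ∀ i : Fin n, Tendsto (fun k => ‖X (k+1) i - X k i‖) atTop (𝓝 0) := by
    intro i
    have heq : ∀ k, ‖X (k+1) i - X k i‖
        = (1/(4 * (((A i).card : ℝ) + ((B i).card : ℝ))))
          * ‖gradB a A dhat B lhat i (V k (i:ℕ))‖ := by
      intro k
      have hcpos : (0:ℝ) < 1/(4 * (((A i).card : ℝ) + ((B i).card : ℝ))) := by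
        have := hMpos i; exact div_pos one_pos (by linarith)
      rw [hstep k i]
      have h2 : X k i - (1/(4 * (((A i).card : ℝ) + ((B i).card : ℝ)))) •
          gradB a A dhat B lhat i (V k (i:ℕ)) - X k i
          = -((1/(4 * (((A i).card : ℝ) + ((B i).card : ℝ)))) •
            gradB a A dhat B lhat i (V k (i:ℕ))) := by abel
      rw [h2, norm_neg, norm_smul, Real.norm_eq_abs, abs_of_pos hcpos]
    have := (hgV i).const_mul (1/(4 * (((A i).card : ℝ) + ((B i).card : ℝ))))
    rw [mul_zero] at this
    exact this.congr (fun k => (heq k).symm)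
  have hgX : ∀ i : Fin n, Tendsto (fun k => ‖gradB a A dhat B lhat i (X k)‖) atTop (𝓝 0) := by
    intro i
    apply squeeze_zero (fun k => norm_nonneg _)
      (g := fun k => ‖gradB a A dhat B lhat i (V k (i:ℕ))‖
        + 4 * (((A i).card : ℝ) + ((B i).card : ℝ)) * ∑ q, ‖X (k+1) q - X k q‖)
    · intro k
      have htri : ‖gradB a A dhat B lhat i (X k)‖
          ≤ ‖gradB a A dhat B lhat i (V k (i:ℕ))‖
            + ‖gradB a A dhat B lhat i (V k (i:ℕ)) - gradB a A dhat B lhat i (X k)‖ := by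
        have h := norm_sub_le (gradB a A dhat B lhat i (V k (i:ℕ)))
          (gradB a A dhat B lhat i (V k (i:ℕ)) - gradB a A dhat B lhat i (X k))
        have h2 : gradB a A dhat B lhat i (V k (i:ℕ))
            - (gradB a A dhat B lhat i (V k (i:ℕ)) - gradB a A dhat B lhat i (X k))
            = gradB a A dhat B lhat i (X k) := by abel
        rwa [h2] at h
      have hlip := gradB_lip a A dhat B lhat hdhat hlhat i (V k (i:ℕ)) (X k)
      have hsum : (∑ q, ‖V k (i:ℕ) q - X k q‖) ≤ ∑ q, ‖X (k+1) q - X k q‖ :=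
        Finset.sum_le_sum fun q _ => hVX k (i:ℕ) q
      have hc : (0:ℝ) ≤ 4 * (((A i).card : ℝ) + ((B i).card : ℝ)) := by
        have := hMpos i; linarith
      have := mul_le_mul_of_nonneg_left hsum hc
      linarith
    · have hsum0 : Tendsto (fun k => ∑ q, ‖X (k+1) q - X k q‖) atTop (𝓝 0) := by
        have := tendsto_finset_sum Finset.univ (fun (q : Fin n) _ => hDelta q)
        simpa using this
      have := (hgV i).add (hsum0.const_mul (4 * (((A i).card : ℝ) + ((B i).card : ℝ))))
      simpa using this
  -- boundedness of the iterates
  have hF0 : ∀ k, obj a A dhat B lhat (X k) ≤ obj a A dhat B lhat (X 0) :=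
    fun k => hanti (Nat.zero_le k)
  have hRex : ∀ i : Fin n, ∃ R : ℝ, ∀ k, ‖X k i‖ ≤ R := by
    intro i
    obtain ⟨r, c, hc0, hcB, hcA⟩ := hconn i
    obtain ⟨j, hj⟩ := hcA
    have key : ∀ s, s ≤ r → ∀ k, ‖X k (c (r - s))‖
        ≤ (‖a j‖ + dhat (c r) j + Real.sqrt (obj a A dhat B lhat (X 0)))
          + ∑ t ∈ Finset.Ico (r - s) r,
              (lhat (c t) (c (t+1)) + Real.sqrt (2 * obj a A dhat B lhat (X 0))) := by
      intro s
      induction s with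
      | zero =>
        intro _ k
        simp only [Nat.sub_zero, Finset.Ico_self, Finset.sum_empty, add_zero]
        have h1 := bndA a A dhat B lhat (X k) (c r) hj
        have h2 : Real.sqrt (obj a A dhat B lhat (X k))
            ≤ Real.sqrt (obj a A dhat B lhat (X 0)) := Real.sqrt_le_sqrt (hF0 k)
        linarith
      | succ s ih =>
        intro hs k
        have hs' : s ≤ r := Nat.le_of_succ_le hs
        have ht0r : r - (s+1) < r := by omega
        have ht1 : r - s = (r - (s+1)) + 1 := by omega
        have hmem := hcB (r - (s+1)) ht0r
        have h1 := bndB a A dhat B lhat (X k) (c (r - (s+1))) hmem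
        have h2 := ih hs' k
        rw [ht1] at h2
        have h3 : (∑ t ∈ Finset.Ico (r - (s+1)) r,
              (lhat (c t) (c (t+1)) + Real.sqrt (2 * obj a A dhat B lhat (X 0))))
            = (lhat (c (r - (s+1))) (c ((r - (s+1))+1))
                + Real.sqrt (2 * obj a A dhat B lhat (X 0)))
              + ∑ t ∈ Finset.Ico ((r - (s+1))+1) r,
                (lhat (c t) (c (t+1)) + Real.sqrt (2 * obj a A dhat B lhat (X 0))) :=
          Finset.sum_eq_sum_Ico_succ_bot ht0r _
        rw [h3]
        have h4 : Real.sqrt (2 * obj a A dhat B lhat (X k))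
            ≤ Real.sqrt (2 * obj a A dhat B lhat (X 0)) :=
          Real.sqrt_le_sqrt (by linarith [hF0 k])
        linarith
    refine ⟨(‖a j‖ + dhat (c r) j + Real.sqrt (obj a A dhat B lhat (X 0)))
          + ∑ t ∈ Finset.Ico 0 r,
              (lhat (c t) (c (t+1)) + Real.sqrt (2 * obj a A dhat B lhat (X 0))), fun k => ?_⟩
    have := key r le_rfl k
    rwa [Nat.sub_self, hc0] at this
  choose R hR using hRex
  -- L is a lower bound for obj
  have hmin : ∀ y, L ≤ obj a A dhat B lhat y := by
    intro y
    have hwle : ∀ k, obj a A dhat B lhat (X k)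
        - ∑ i, ‖gradB a A dhat B lhat i (X k)‖ * (‖y i‖ + R i) ≤ obj a A dhat B lhat y := by
      intro k
      have hcv := obj_convex a A dhat B lhat hdhat hlhat hBsymm hlsymm (X k) y
      have hterm : ∀ i : Fin n, -(‖gradB a A dhat B lhat i (X k)‖ * (‖y i‖ + R i))
          ≤ ⟪gradB a A dhat B lhat i (X k), y i - X k i⟫ := by
        intro i
        have h1 := abs_real_inner_le_norm (gradB a A dhat B lhat i (X k)) (y i - X k i)
        have h2 : ‖y i - X k i‖ ≤ ‖y i‖ + R i :=
          le_trans (norm_sub_le _ _) (by linarith [hR i k])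
        have h3 : ‖gradB a A dhat B lhat i (X k)‖ * ‖y i - X k i‖
            ≤ ‖gradB a A dhat B lhat i (X k)‖ * (‖y i‖ + R i) :=
          mul_le_mul_of_nonneg_left h2 (norm_nonneg _)
        have h4 := neg_abs_le (⟪gradB a A dhat B lhat i (X k), y i - X k i⟫)
        linarith
      have hsum : -(∑ i, ‖gradB a A dhat B lhat i (X k)‖ * (‖y i‖ + R i))
          ≤ ∑ i, ⟪gradB a A dhat B lhat i (X k), y i - X k i⟫ := by
        rw [← Finset.sum_neg_distrib]
        exact Finset.sum_le_sum fun i _ => hterm i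
      linarith
    have hsum0 : Tendsto (fun k => ∑ i, ‖gradB a A dhat B lhat i (X k)‖ * (‖y i‖ + R i))
        atTop (𝓝 0) := by
      have := tendsto_finset_sum Finset.univ
        (fun (i : Fin n) _ => (hgX i).mul_const (‖y i‖ + R i))
      simpa using this
    have hwt : Tendsto (fun k => obj a A dhat B lhat (X k)
        - ∑ i, ‖gradB a A dhat B lhat i (X k)‖ * (‖y i‖ + R i)) atTop (𝓝 (L - 0)) :=
      hL.sub hsum0
    have := le_of_tendsto hwt (Filter.Eventually.of_forall hwle)
    linarith
  -- value at any cluster point is L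
  have hclv : ∀ p, MapClusterPt p atTop X → obj a A dhat B lhat p = L := by
    intro p hp
    have hc2 : MapClusterPt (obj a A dhat B lhat p) atTop ((obj a A dhat B lhat) ∘ X) :=
      hp.continuousAt_comp (obj_continuous a A dhat B lhat).continuousAt
    have hc3 : ClusterPt (obj a A dhat B lhat p) (𝓝 L) := hc2.clusterPt.mono hL
    exact eq_of_nhds_neBot hc3
  -- existence of a cluster point
  have hXmem : ∀ k, X k ∈ Set.pi Set.univ
      (fun i => Metric.closedBall (0:EuclideanSpace ℝ (Fin d)) (R i)) := by
    intro k i _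
    rw [Metric.mem_closedBall, dist_zero_right]
    exact hR i k
  have hcomp : IsCompact (Set.pi Set.univ
      (fun i => Metric.closedBall (0:EuclideanSpace ℝ (Fin d)) (R i))) :=
    isCompact_univ_pi fun i => isCompact_closedBall _ _
  obtain ⟨p0, -, φ, hφ, hφt⟩ := hcomp.tendsto_subseq hXmem
  have hp0 : MapClusterPt p0 atTop X :=
    MapClusterPt.of_comp hφ.tendsto_atTop hφt.mapClusterPt
  have hbdd2 : BddBelow (Set.range fun y => obj a A dhat B lhat y) := by
    refine ⟨0, ?_⟩
    rintro _ ⟨y, rfl⟩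
    exact obj_nonneg a A dhat B lhat y
  have hinf : (⨅ y : Fin n → EuclideanSpace ℝ (Fin d), obj a A dhat B lhat y) = L := by
    refine le_antisymm ?_ (le_ciInf hmin)
    calc (⨅ y : Fin n → EuclideanSpace ℝ (Fin d), obj a A dhat B lhat y)
        ≤ obj a A dhat B lhat p0 := ciInf_le hbdd2 p0
      _ = L := hclv p0 hp0
  constructor
  · intro p hp y
    rw [hclv p hp]
    exact hmin y
  · rw [hinf]
    exact hL
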